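/- Let ℒ ⊂ ℝ^{n+1} be a lattice, y0 > 0, k ∈ ℒ*, and let V be the ℂ-linear span of {ω_{δk} : δ ∈ H_ℒ}. Suppose (u1,z1), (u2,z2) ∈ H_ℒ·k with z1 ≠ z2 and z1 ≠ −z2, and suppose z1·y0 ∉ ℤ \ {0} and z2·y0 ∉ ℤ \ {0} (which holds for all y0 outside the countable set (1/z1)ℤ ∪ (1/z2)ℤ when z1, z2 ≠ 0). Then the waves ω_{u1} and ω_{u2} (on ℝ^n) belong to Π_{y0}(V), the J̃-orbits J̃·u1 and J̃·u2 are disjoint, and the spans of {ω_p : p ∈ J̃·u1} and of {ω_p : p ∈ J̃·u2} are nonzero J̃-invariant subspaces of Π_{y0}(V) with trivial intersection; thus the projection of the single mode V is a mode interaction of at least two modes. -/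

import Mathlib

open MeasureTheory
open scoped Classical

noncomputable section

/-- The Euclidean dot product on `ℝⁿ`. -/
def dotn {n : ℕ} (a b : Fin n → ℝ) : ℝ := ∑ i, a i * b i

/-- `ℝ^{n+1}` viewed as `ℝⁿ × ℝ`, points written `(x, y)`. -/
abbrev V1 (n : ℕ) := (Fin n → ℝ) × ℝ

/-- The standard inner product on `ℝ^{n+1} = ℝⁿ × ℝ`. -/
def dot1 {n : ℕ} (k p : V1 n) : ℝ := dotn k.1 p.1 + k.2 * p.2

/-- `e^{2πit}`. -/
def expz (t : ℝ) : ℂ := Complex.exp (2 * (Real.pi : ℂ) * Complex.I * (t : ℂ))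

/-- The wave `ω_k` on `ℝ^{n+1}`. -/
def wave {n : ℕ} (k : V1 n) : V1 n → ℂ := fun p => expz (dot1 k p)

/-- The wave `ω_k̃` on `ℝⁿ`. -/
def waveN {n : ℕ} (k : Fin n → ℝ) : (Fin n → ℝ) → ℂ := fun x => expz (dotn k x)

/-- The projection operator `Π_{y0}`. -/
def Proj {n : ℕ} (y0 : ℝ) (f : V1 n → ℂ) : (Fin n → ℝ) → ℂ :=
  fun x => ∫ y in (0:ℝ)..y0, f (x, y)

/-- The lattice generated over `ℤ` by the vectors `b i`. -/
def latticeOf {n : ℕ} (b : Fin (n+1) → V1 n) : Set (V1 n) :=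
  {v | ∃ c : Fin (n+1) → ℤ, v = ∑ i, (c i : ℝ) • b i}

/-- The dual lattice `ℒ*` of a subset of `ℝ^{n+1}`. -/
def dualLat {n : ℕ} (L : Set (V1 n)) : Set (V1 n) :=
  {k | ∀ l ∈ L, ∃ m : ℤ, dot1 k l = (m : ℝ)}

/-- The dual lattice of a subset of `ℝⁿ`. -/
def dualN {n : ℕ} (Lt : Set (Fin n → ℝ)) : Set (Fin n → ℝ) :=
  {k | ∀ v ∈ Lt, ∃ m : ℤ, dotn k v = (m : ℝ)}

/-- `𝒳_ℒ`: the ℂ-linear span of the waves `ω_k`, `k ∈ ℒ*`. -/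
def XL {n : ℕ} (L : Set (V1 n)) : Submodule ℂ (V1 n → ℂ) :=
  Submodule.span ℂ (wave '' dualLat L)

/-- The ℂ-linear span of the waves `ω_k̃`, `k̃` in the dual of a planar lattice. -/
def XN {n : ℕ} (Lt : Set (Fin n → ℝ)) : Submodule ℂ ((Fin n → ℝ) → ℂ) :=
  Submodule.span ℂ (waveN '' dualN Lt)

/-- Membership in `O(n)`: a linear automorphism of `ℝⁿ` preserving the dot product. -/
def IsOrthoN {n : ℕ} (α : (Fin n → ℝ) ≃ₗ[ℝ] (Fin n → ℝ)) : Prop :=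
  ∀ a b, dotn (α a) (α b) = dotn a b

/-- Membership in `O(n+1)`: a linear automorphism of `ℝ^{n+1}` preserving the inner product. -/
def IsOrtho1 {n : ℕ} (δ : V1 n ≃ₗ[ℝ] V1 n) : Prop :=
  ∀ a b, dot1 (δ a) (δ b) = dot1 a b

/-- The holohedry `H_ℒ`: orthogonal transformations mapping `ℒ` to itself. -/
def HolL {n : ℕ} (L : Set (V1 n)) : Set (V1 n ≃ₗ[ℝ] V1 n) :=
  {γ | IsOrtho1 γ ∧ (⇑γ) '' L = L}

/-- `α₊`: acts as `α` on `ℝⁿ` and `+1` on the last coordinate. -/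
def aPlus {n : ℕ} (α : (Fin n → ℝ) ≃ₗ[ℝ] (Fin n → ℝ)) : V1 n ≃ₗ[ℝ] V1 n :=
  α.prodCongr (LinearEquiv.refl ℝ ℝ)

/-- `α₋`: acts as `α` on `ℝⁿ` and `−1` on the last coordinate. -/
def aMinus {n : ℕ} (α : (Fin n → ℝ) ≃ₗ[ℝ] (Fin n → ℝ)) : V1 n ≃ₗ[ℝ] V1 n :=
  α.prodCongr (LinearEquiv.neg ℝ)

/-- The group `J̃` of induced orthogonal symmetries. -/
def Jt {n : ℕ} (L : Set (V1 n)) (y0 : ℝ) : Set ((Fin n → ℝ) ≃ₗ[ℝ] (Fin n → ℝ)) :=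
  {α | IsOrthoN α ∧
    (aPlus α ∈ HolL L ∨ ((((0 : Fin n → ℝ), y0) : V1 n) ∈ L ∧ aMinus α ∈ HolL L))}

/-- The subset `J̃↑` of `H_ℒ`. -/
def Jup {n : ℕ} (L : Set (V1 n)) (y0 : ℝ) : Set (V1 n ≃ₗ[ℝ] V1 n) :=
  {γ | ∃ α ∈ Jt L y0,
    (γ = aPlus α ∧ aPlus α ∈ HolL L) ∨ (γ = aMinus α ∧ aMinus α ∈ HolL L)}

/-- The set `J^α_k = {δ ∈ H_ℒ : P(δk) = α k̃}`. -/
def Jset {n : ℕ} (L : Set (V1 n)) (k : V1 n) (α : (Fin n → ℝ) ≃ₗ[ℝ] (Fin n → ℝ)) :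
    Set (V1 n ≃ₗ[ℝ] V1 n) :=
  {δ ∈ HolL L | (δ k).1 = α k.1}

/-- The set `J^{Id}_k = {δ ∈ H_ℒ : P(δk) = k̃}`. -/
def JId {n : ℕ} (L : Set (V1 n)) (k : V1 n) : Set (V1 n ≃ₗ[ℝ] V1 n) :=
  {δ ∈ HolL L | (δ k).1 = k.1}

/-- The set `S_k = ⋃_{α ∈ J̃} J^α_k`. -/
def Sk {n : ℕ} (L : Set (V1 n)) (y0 : ℝ) (k : V1 n) : Set (V1 n ≃ₗ[ℝ] V1 n) :=
  ⋃ α ∈ Jt L y0, Jset L k α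

/-- The isotropy subgroup `Σ_k` of `k` in `H_ℒ`. -/
def Sigk {n : ℕ} (L : Set (V1 n)) (k : V1 n) : Set (V1 n ≃ₗ[ℝ] V1 n) :=
  {δ ∈ HolL L | δ k = k}

/-- The orbit `H_ℒ·k`. -/
def HOrb {n : ℕ} (L : Set (V1 n)) (k : V1 n) : Set (V1 n) :=
  (fun δ : V1 n ≃ₗ[ℝ] V1 n => δ k) '' HolL L

/-- The orbit `J̃·u`. -/
def JOrb {n : ℕ} (L : Set (V1 n)) (y0 : ℝ) (u : Fin n → ℝ) : Set (Fin n → ℝ) :=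
  (fun α : (Fin n → ℝ) ≃ₗ[ℝ] (Fin n → ℝ) => α u) '' Jt L y0

/-- The single mode `V`: the ℂ-span of the waves `ω_{δk}`, `δ ∈ H_ℒ`. -/
def modeV {n : ℕ} (L : Set (V1 n)) (k : V1 n) : Submodule ℂ (V1 n → ℂ) :=
  Submodule.span ℂ ((fun δ : V1 n ≃ₗ[ℝ] V1 n => wave (δ k)) '' HolL L)

/-- The projected lattice `𝓛̃`. -/
def projLat {n : ℕ} (L : Set (V1 n)) (y0 : ℝ) : Set (Fin n → ℝ) :=
  if (((0 : Fin n → ℝ), y0) : V1 n) ∈ L then Prod.fst '' L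
  else Prod.fst '' (L ∩ {p : V1 n | p.2 = 0})

-- ## Auxiliary lemmas

lemma expz_add (a b : ℝ) : expz (a+b) = expz a * expz b := by
  simp only [expz, ← Complex.exp_add, Complex.ofReal_add]; ring_nf

lemma expz_zero : expz 0 = 1 := by simp [expz]

lemma expz_inj {a b : ℝ} (h : expz a = expz b) : ∃ m : ℤ, a - b = (m : ℝ) := by
  rw [expz, expz, Complex.exp_eq_exp_iff_exists_int] at h
  obtain ⟨m, hm⟩ := h
  refine ⟨m, ?_⟩
  have h2 : (2 * (Real.pi:ℂ) * Complex.I) ≠ 0 := by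
    simp [Real.pi_ne_zero, Complex.I_ne_zero]
  have : (2 * (Real.pi:ℂ) * Complex.I) * (a : ℂ) =
      (2 * (Real.pi:ℂ) * Complex.I) * ((b : ℂ) + (m:ℂ)) := by rw [hm]; ring
  have h3 : (a : ℂ) = (b : ℂ) + (m : ℂ) := mul_left_cancel₀ h2 this
  have : (a : ℂ) - b = (m : ℂ) := by rw [h3]; ring
  exact_mod_cast this

lemma dotn_add_right {n : ℕ} (u x y : Fin n → ℝ) : dotn u (x+y) = dotn u x + dotn u y := by
  simp [dotn, mul_add, Finset.sum_add_distrib]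

lemma dotn_sub_left {n : ℕ} (u v x : Fin n → ℝ) : dotn (u - v) x = dotn u x - dotn v x := by
  simp [dotn, sub_mul, Finset.sum_sub_distrib]

lemma dotn_smul_right {n : ℕ} (u : Fin n → ℝ) (t : ℝ) (x : Fin n → ℝ) :
    dotn u (t • x) = t * dotn u x := by
  simp only [dotn, Pi.smul_apply, smul_eq_mul, Finset.mul_sum]
  exact Finset.sum_congr rfl fun i _ => by ring

lemma dotn_zero_right {n : ℕ} (u : Fin n → ℝ) : dotn u 0 = 0 := by simp [dotn]

lemma dotn_self_eq_zero {n : ℕ} {u : Fin n → ℝ} (h : dotn u u = 0) : u = 0 := by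
  have : ∀ i ∈ Finset.univ, u i * u i = 0 := by
    intro i _
    have := (Finset.sum_eq_zero_iff_of_nonneg (fun i _ => mul_self_nonneg (u i))).1 h
    exact this i (Finset.mem_univ i)
  funext i
  have := this i (Finset.mem_univ i)
  exact mul_self_eq_zero.mp this

lemma waveN_injective {n : ℕ} : Function.Injective (waveN (n := n)) := by
  intro u v h
  have key : ∀ x, ∃ m : ℤ, dotn (u - v) x = (m : ℝ) := by
    intro x
    have := congrFun h x
    obtain ⟨m, hm⟩ := expz_inj this
    exact ⟨m, by rw [dotn_sub_left]; exact hm⟩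
  by_contra hne
  have hz : dotn (u-v) (u-v) ≠ 0 := fun h0 => hne (sub_eq_zero.mp (dotn_self_eq_zero h0))
  obtain ⟨m, hm⟩ := key ((1/(2*dotn (u-v) (u-v))) • (u-v))
  rw [dotn_smul_right] at hm
  have h3 : dotn (u-v) (u-v) * (2*(m:ℝ) - 1) = 0 := by
    field_simp at hm
    rw [← hm]; ring
  rcases mul_eq_zero.mp h3 with h4 | h4
  · exact hz h4
  · have h2 : (2:ℝ) * m = 1 := by linarith
    have : (2 * m : ℤ) = 1 := by exact_mod_cast h2
    omega

def chi {n : ℕ} (u : Fin n → ℝ) : Multiplicative (Fin n → ℝ) →* ℂ where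
  toFun x := waveN u (Multiplicative.toAdd x)
  map_one' := by simp [waveN, dotn_zero_right, expz_zero]
  map_mul' x y := by
    simp only [toAdd_mul, waveN]
    rw [dotn_add_right, expz_add]

lemma waveN_linearIndependent {n : ℕ} :
    LinearIndependent ℂ (waveN (n := n)) := by
  have h := (linearIndependent_monoidHom (Multiplicative (Fin n → ℝ)) ℂ).comp
    (chi (n := n)) ?_
  · exact h
  · intro u v huv
    apply waveN_injective
    funext x
    exact congrFun (congrArg (fun f : Multiplicative (Fin n → ℝ) →* ℂ => (f : _ → ℂ)) huv) x

-- ## Block 2: integral lemmas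

lemma expz_mul_complex (z y : ℝ) :
    expz (z * y) = Complex.exp ((2 * (Real.pi:ℂ) * Complex.I * z) * (y:ℂ)) := by
  rw [expz]; push_cast; ring_nf

lemma Cint_ne_zero {y0 : ℝ} (hy0 : 0 < y0) {z : ℝ} (hi : ∀ m : ℤ, z * y0 = (m:ℝ) → m = 0) :
    (∫ y in (0:ℝ)..y0, expz (z*y)) ≠ 0 := by
  rcases eq_or_ne z 0 with rfl | hz
  · have h : (∫ y in (0:ℝ)..y0, expz (0*y)) = ((y0:ℝ) : ℂ) := by
      simp [expz_zero]
    rw [h]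
    exact Complex.ofReal_ne_zero.mpr (ne_of_gt hy0)
  · set c : ℂ := 2 * (Real.pi:ℂ) * Complex.I * z with hcdef
    have hc : c ≠ 0 := by
      simp only [hcdef]
      refine mul_ne_zero (mul_ne_zero (mul_ne_zero two_ne_zero ?_) Complex.I_ne_zero) ?_
      · exact_mod_cast Real.pi_ne_zero
      · exact_mod_cast hz
    have hrw : (∫ y in (0:ℝ)..y0, expz (z*y)) =
        (Complex.exp (c * y0) - Complex.exp (c * 0)) / c := by
      rw [intervalIntegral.integral_congr (g := fun y : ℝ => Complex.exp (c * y))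
        (fun y _ => expz_mul_complex z y)]
      exact integral_exp_mul_complex hc
    rw [hrw]
    apply div_ne_zero _ hc
    rw [mul_zero, Complex.exp_zero, sub_ne_zero]
    intro heq
    rw [Complex.exp_eq_one_iff] at heq
    obtain ⟨m, hm⟩ := heq
    have h2 : (2 * (Real.pi:ℂ) * Complex.I) ≠ 0 := by
      simp [Real.pi_ne_zero, Complex.I_ne_zero]
    have h3 : (2 * (Real.pi:ℂ) * Complex.I) * ((z*y0 : ℝ) : ℂ) =
        (2 * (Real.pi:ℂ) * Complex.I) * (m:ℂ) := by
      push_cast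
      push_cast [hcdef] at hm
      linear_combination hm
    have h4 : ((z*y0 : ℝ) : ℂ) = (m:ℂ) := mul_left_cancel₀ h2 h3
    have h5 : z * y0 = (m:ℝ) := by exact_mod_cast h4
    have := hi m h5
    subst this
    simp only [Int.cast_zero] at h5
    rcases mul_eq_zero.mp h5 with h | h
    · exact hz h
    · exact (ne_of_gt hy0) h

lemma Proj_smul_wave {n : ℕ} (y0 : ℝ) (u : Fin n → ℝ) (z : ℝ) (c : ℂ) :
    Proj y0 (c • wave ((u, z) : V1 n)) =
      fun x => c * (expz (dotn u x) * ∫ y in (0:ℝ)..y0, expz (z*y)) := by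
  funext x
  have h1 : ∀ y : ℝ, (c • wave ((u,z) : V1 n)) (x, y) = c * (expz (dotn u x) * expz (z*y)) := by
    intro y
    simp only [Pi.smul_apply, smul_eq_mul, wave, dot1]
    rw [← expz_add]
  simp only [Proj]
  rw [intervalIntegral.integral_congr (g := fun y => c * (expz (dotn u x) * expz (z*y)))
    (fun y _ => h1 y)]
  rw [intervalIntegral.integral_const_mul, intervalIntegral.integral_const_mul]

lemma integrable_wave_slice {n : ℕ} (y0 : ℝ) (v : V1 n) (c : ℂ) (x : Fin n → ℝ) :
    IntervalIntegrable (fun y => (c • wave v) (x, y)) volume 0 y0 := by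
  apply Continuous.intervalIntegrable
  have : Continuous fun y : ℝ => dot1 v (x, y) := by
    simp only [dot1]; fun_prop
  have h2 : Continuous fun y : ℝ => expz (dot1 v (x,y)) := by
    apply Complex.continuous_exp.comp
    fun_prop
  exact (continuous_const.mul h2 : Continuous fun y : ℝ => c * expz (dot1 v (x,y)))

-- ## Block 3: group lemmas

lemma aPlus_apply {n : ℕ} (α : (Fin n → ℝ) ≃ₗ[ℝ] (Fin n → ℝ)) (x : Fin n → ℝ) (y : ℝ) :
    aPlus α ((x, y) : V1 n) = (α x, y) := rfl

lemma aMinus_apply {n : ℕ} (α : (Fin n → ℝ) ≃ₗ[ℝ] (Fin n → ℝ)) (x : Fin n → ℝ) (y : ℝ) :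
    aMinus α ((x, y) : V1 n) = (α x, -y) := rfl

lemma HolL_comp' {n : ℕ} {L : Set (V1 n)} {γ1 γ2 γ3 : V1 n ≃ₗ[ℝ] V1 n}
    (h1 : γ1 ∈ HolL L) (h2 : γ2 ∈ HolL L) (h3 : ∀ p, γ3 p = γ1 (γ2 p)) :
    γ3 ∈ HolL L := by
  constructor
  · intro a b
    rw [h3, h3, h1.1, h2.1]
  · have hfun : ⇑γ3 = ⇑γ1 ∘ ⇑γ2 := funext h3
    rw [hfun, Set.image_comp, h2.2, h1.2]

lemma HolL_apply_HOrb {n : ℕ} {L : Set (V1 n)} {k v : V1 n} {δ : V1 n ≃ₗ[ℝ] V1 n}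
    (hδ : δ ∈ HolL L) (hv : v ∈ HOrb L k) : δ v ∈ HOrb L k := by
  obtain ⟨γ, hγ, rfl⟩ := hv
  exact ⟨γ.trans δ, HolL_comp' hδ hγ (fun p => rfl), rfl⟩

lemma HOrb_norm {n : ℕ} {L : Set (V1 n)} {k v : V1 n} (hv : v ∈ HOrb L k) :
    dot1 v v = dot1 k k := by
  obtain ⟨γ, hγ, rfl⟩ := hv
  exact hγ.1 k k

/-- Applying `α ∈ J̃` to the projected part of an orbit element. -/
lemma Jt_apply_HOrb {n : ℕ} {L : Set (V1 n)} {y0 : ℝ} {k : V1 n} {u : Fin n → ℝ} {z : ℝ}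
    {α : (Fin n → ℝ) ≃ₗ[ℝ] (Fin n → ℝ)} (hα : α ∈ Jt L y0)
    (h : ((u, z) : V1 n) ∈ HOrb L k) :
    ((α u, z) : V1 n) ∈ HOrb L k ∨ ((α u, -z) : V1 n) ∈ HOrb L k := by
  rcases hα.2 with hp | hm
  · left
    have := HolL_apply_HOrb hp h
    rwa [aPlus_apply] at this
  · right
    have := HolL_apply_HOrb hm.2 h
    rwa [aMinus_apply] at this

lemma one_mem_Jt {n : ℕ} {L : Set (V1 n)} {y0 : ℝ} :
    (LinearEquiv.refl ℝ (Fin n → ℝ)) ∈ Jt L y0 := by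
  constructor
  · intro a b; rfl
  · left
    constructor
    · intro a b; rfl
    · have : ⇑(aPlus (LinearEquiv.refl ℝ (Fin n → ℝ))) = id := by
        funext p; rfl
      rw [this, Set.image_id]

lemma mem_JOrb_self {n : ℕ} {L : Set (V1 n)} {y0 : ℝ} (u : Fin n → ℝ) :
    u ∈ JOrb L y0 u :=
  ⟨LinearEquiv.refl ℝ _, one_mem_Jt, rfl⟩

lemma Jt_comp {n : ℕ} {L : Set (V1 n)} {y0 : ℝ}
    {α β : (Fin n → ℝ) ≃ₗ[ℝ] (Fin n → ℝ)} (hα : α ∈ Jt L y0) (hβ : β ∈ Jt L y0) :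
    (β.trans α) ∈ Jt L y0 := by
  refine ⟨fun a b => by rw [LinearEquiv.trans_apply, LinearEquiv.trans_apply, hα.1, hβ.1], ?_⟩
  rcases hα.2 with hpa | hma <;> rcases hβ.2 with hpb | hmb
  · exact Or.inl (HolL_comp' hpa hpb (fun p => rfl))
  · exact Or.inr ⟨hmb.1, HolL_comp' hpa hmb.2 (fun p => rfl)⟩
  · exact Or.inr ⟨hma.1, HolL_comp' hma.2 hpb (fun p => rfl)⟩
  · exact Or.inl (HolL_comp' hma.2 hmb.2 (fun p => by
      cases p with
      | mk x y => simp [aPlus_apply, aMinus_apply]))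

-- ## Block 4: core lemmas

/-- The "good" predicate: `g` is the projection of a nice element of the mode `V`. -/
def GoodP {n : ℕ} (L : Set (V1 n)) (k : V1 n) (y0 : ℝ) (g : (Fin n → ℝ) → ℂ) : Prop :=
  ∃ f, f ∈ modeV L k ∧ (∀ x, IntervalIntegrable (fun y => f (x,y)) volume 0 y0) ∧
    Proj y0 f = g

lemma GoodP.mem_image {n : ℕ} {L : Set (V1 n)} {k : V1 n} {y0 : ℝ} {g : (Fin n → ℝ) → ℂ}
    (h : GoodP L k y0 g) : g ∈ Proj y0 '' (modeV L k : Set (V1 n → ℂ)) := by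
  obtain ⟨f, hf, _, hp⟩ := h
  exact ⟨f, hf, hp⟩

lemma goodP_zero {n : ℕ} (L : Set (V1 n)) (k : V1 n) (y0 : ℝ) : GoodP L k y0 0 := by
  refine ⟨0, Submodule.zero_mem _, fun x => ?_, ?_⟩
  · simpa using intervalIntegrable_const (c := (0:ℂ))
  · funext x; simp [Proj]

lemma goodP_add {n : ℕ} {L : Set (V1 n)} {k : V1 n} {y0 : ℝ} {g1 g2 : (Fin n → ℝ) → ℂ}
    (h1 : GoodP L k y0 g1) (h2 : GoodP L k y0 g2) : GoodP L k y0 (g1 + g2) := by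
  obtain ⟨f1, hf1, hi1, hp1⟩ := h1
  obtain ⟨f2, hf2, hi2, hp2⟩ := h2
  refine ⟨f1 + f2, Submodule.add_mem _ hf1 hf2, fun x => (hi1 x).add (hi2 x), ?_⟩
  funext x
  have : Proj y0 (f1 + f2) x = Proj y0 f1 x + Proj y0 f2 x := by
    simp only [Proj, Pi.add_apply]
    exact intervalIntegral.integral_add (hi1 x) (hi2 x)
  rw [this, hp1, hp2]; rfl

lemma goodP_smul {n : ℕ} {L : Set (V1 n)} {k : V1 n} {y0 : ℝ} {g : (Fin n → ℝ) → ℂ}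
    (c : ℂ) (h : GoodP L k y0 g) : GoodP L k y0 (c • g) := by
  obtain ⟨f, hf, hi, hp⟩ := h
  refine ⟨c • f, Submodule.smul_mem _ c hf, fun x => ?_, ?_⟩
  · exact (hi x).smul c
  · funext x
    have : Proj y0 (c • f) x = c • Proj y0 f x := by
      simp only [Proj, Pi.smul_apply]
      exact intervalIntegral.integral_smul c _
    rw [this, hp]; rfl

lemma goodP_waveN {n : ℕ} {L : Set (V1 n)} {k : V1 n} {y0 : ℝ} (hy0 : 0 < y0)
    {u : Fin n → ℝ} {z : ℝ} (h : ((u, z) : V1 n) ∈ HOrb L k)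
    (hi : ∀ m : ℤ, z * y0 = (m:ℝ) → m = 0) : GoodP L k y0 (waveN u) := by
  set C : ℂ := ∫ y in (0:ℝ)..y0, expz (z*y) with hC
  have hCne : C ≠ 0 := Cint_ne_zero hy0 hi
  obtain ⟨δ, hδ, hδk⟩ := h
  refine ⟨C⁻¹ • wave ((u,z) : V1 n), ?_, fun x => integrable_wave_slice y0 _ _ x, ?_⟩
  · refine Submodule.smul_mem _ _ (Submodule.subset_span ⟨δ, hδ, ?_⟩)
    show wave (δ k) = wave ((u, z) : V1 n)
    rw [show δ k = ((u,z) : V1 n) from hδk]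
  · rw [Proj_smul_wave]
    funext x
    rw [← hC, mul_comm (expz (dotn u x)) C, ← mul_assoc, inv_mul_cancel₀ hCne, one_mul]
    rfl

lemma neg_int_hyp {z y0 : ℝ} (hi : ∀ m : ℤ, z * y0 = (m:ℝ) → m = 0) :
    ∀ m : ℤ, (-z) * y0 = (m:ℝ) → m = 0 := by
  intro m hm
  have : z * y0 = ((-m : ℤ) : ℝ) := by push_cast; linarith
  have := hi (-m) this
  omega

lemma span_JOrb_good {n : ℕ} {L : Set (V1 n)} {k : V1 n} {y0 : ℝ} (hy0 : 0 < y0)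
    {u : Fin n → ℝ} {z : ℝ} (h : ((u, z) : V1 n) ∈ HOrb L k)
    (hi : ∀ m : ℤ, z * y0 = (m:ℝ) → m = 0) :
    ∀ g ∈ Submodule.span ℂ (waveN '' JOrb L y0 u), GoodP L k y0 g := by
  intro g hg
  induction hg using Submodule.span_induction with
  | mem g hgm =>
    obtain ⟨w, ⟨α, hα, rfl⟩, rfl⟩ := hgm
    rcases Jt_apply_HOrb hα h with h' | h'
    · exact goodP_waveN hy0 h' hi
    · exact goodP_waveN hy0 h' (neg_int_hyp hi)
  | zero => exact goodP_zero L k y0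
  | add f g _ _ hf hg => exact goodP_add hf hg
  | smul c f _ hf => exact goodP_smul c hf

lemma span_JOrb_invariant {n : ℕ} {L : Set (V1 n)} {y0 : ℝ} (u : Fin n → ℝ)
    {α : (Fin n → ℝ) ≃ₗ[ℝ] (Fin n → ℝ)} (hα : α ∈ Jt L y0) :
    ∀ g ∈ Submodule.span ℂ (waveN '' JOrb L y0 u),
      (fun x => g (α.symm x)) ∈ Submodule.span ℂ (waveN '' JOrb L y0 u) := by
  intro g hg
  induction hg using Submodule.span_induction with
  | mem g hgm =>
    obtain ⟨w, ⟨β, hβ, rfl⟩, rfl⟩ := hgm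
    have heq : (fun x => waveN (β u) (α.symm x)) = waveN ((β.trans α) u) := by
      funext x
      have hd : dotn ((β.trans α) u) x = dotn (β u) (α.symm x) := by
        conv_lhs => rw [← α.apply_symm_apply x]
        exact hα.1 (β u) (α.symm x)
      simp only [waveN, hd]
    rw [heq]
    exact Submodule.subset_span ⟨(β.trans α) u, ⟨β.trans α, Jt_comp hα hβ, rfl⟩, rfl⟩
  | zero => exact Submodule.zero_mem _
  | add f g _ _ hf hg => exact Submodule.add_mem _ hf hg
  | smul c f _ hf => exact Submodule.smul_mem _ c hf

lemma JOrb_disjoint {n : ℕ} {L : Set (V1 n)} {k : V1 n} {y0 : ℝ}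
    {u1 u2 : Fin n → ℝ} {z1 z2 : ℝ}
    (h1 : ((u1, z1) : V1 n) ∈ HOrb L k) (h2 : ((u2, z2) : V1 n) ∈ HOrb L k)
    (hz : z1 ≠ z2) (hz' : z1 ≠ -z2) :
    JOrb L y0 u1 ∩ JOrb L y0 u2 = ∅ := by
  ext w
  simp only [Set.mem_inter_iff, Set.mem_empty_iff_false, iff_false, not_and]
  rintro ⟨α, hα, rfl⟩ ⟨β, hβ, hw0⟩
  have hw : β u2 = α u1 := hw0
  have key : ∀ (v : Fin n → ℝ) (s : ℝ), ((v, s) : V1 n) ∈ HOrb L k →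
      dotn v v + s * s = dot1 k k := by
    intro v s hv
    have := HOrb_norm hv
    simpa [dot1] using this
  have e1 : ∃ s1 : ℝ, s1 * s1 = z1 * z1 ∧ ((α u1, s1) : V1 n) ∈ HOrb L k := by
    rcases Jt_apply_HOrb hα h1 with h | h
    · exact ⟨z1, rfl, h⟩
    · exact ⟨-z1, by ring, h⟩
  have e2 : ∃ s2 : ℝ, s2 * s2 = z2 * z2 ∧ ((α u1, s2) : V1 n) ∈ HOrb L k := by
    rcases Jt_apply_HOrb hβ h2 with h | h
    · exact ⟨z2, rfl, by rwa [← hw]⟩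
    · exact ⟨-z2, by ring, by rwa [← hw]⟩
  obtain ⟨s1, hs1, hm1⟩ := e1
  obtain ⟨s2, hs2, hm2⟩ := e2
  have := (key _ _ hm1).trans (key _ _ hm2).symm
  have hzz : z1 * z1 = z2 * z2 := by rw [← hs1, ← hs2]; linarith
  have : (z1 - z2) * (z1 + z2) = 0 := by ring_nf; linarith
  rcases mul_eq_zero.mp this with h | h
  · exact hz (by linarith)
  · exact hz' (by linarith)

lemma waveN_ne_zero {n : ℕ} (u : Fin n → ℝ) : waveN u ≠ 0 := by
  intro h
  have := congrFun h 0
  rw [waveN, dotn_zero_right, expz_zero] at this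
  simp at this

lemma span_JOrb_ne_bot {n : ℕ} (L : Set (V1 n)) (y0 : ℝ) (u : Fin n → ℝ) :
    Submodule.span ℂ (waveN '' JOrb L y0 u) ≠ ⊥ := by
  intro hbot
  have hmem : waveN u ∈ Submodule.span ℂ (waveN '' JOrb L y0 u) :=
    Submodule.subset_span ⟨u, mem_JOrb_self u, rfl⟩
  rw [hbot, Submodule.mem_bot] at hmem
  exact waveN_ne_zero u hmem

/-- if `(u1,z1),(u2,z2) ∈ H_ℒ·k` with `z1 ≠ ±z2` and `z1·y0, z2·y0 ∉ ℤ\{0}`,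
then `ω_{u1}, ω_{u2} ∈ Π_{y0}(V)`, the orbits `J̃·u1`, `J̃·u2` are disjoint, and the spans
of their waves are nonzero `J̃`-invariant subspaces of `Π_{y0}(V)` with trivial
intersection: a mode interaction of at least two modes. -/
theorem stmt_19 (n : ℕ) (hn : 1 ≤ n) (b : Fin (n+1) → V1 n) (hb : LinearIndependent ℝ b)
    (y0 : ℝ) (hy0 : 0 < y0) (k : V1 n) (hk : k ∈ dualLat (latticeOf b))
    (u1 u2 : Fin n → ℝ) (z1 z2 : ℝ)
    (h1 : ((u1, z1) : V1 n) ∈ HOrb (latticeOf b) k)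
    (h2 : ((u2, z2) : V1 n) ∈ HOrb (latticeOf b) k)
    (hz : z1 ≠ z2) (hz' : z1 ≠ -z2)
    (hi1 : ∀ m : ℤ, z1 * y0 = (m : ℝ) → m = 0)
    (hi2 : ∀ m : ℤ, z2 * y0 = (m : ℝ) → m = 0) :
    waveN u1 ∈ Proj y0 '' (modeV (latticeOf b) k : Set (V1 n → ℂ)) ∧
    waveN u2 ∈ Proj y0 '' (modeV (latticeOf b) k : Set (V1 n → ℂ)) ∧
    JOrb (latticeOf b) y0 u1 ∩ JOrb (latticeOf b) y0 u2 = ∅ ∧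
    Submodule.span ℂ (waveN '' JOrb (latticeOf b) y0 u1) ≠ ⊥ ∧
    Submodule.span ℂ (waveN '' JOrb (latticeOf b) y0 u2) ≠ ⊥ ∧
    (Submodule.span ℂ (waveN '' JOrb (latticeOf b) y0 u1) :
        Set ((Fin n → ℝ) → ℂ)) ⊆
      Proj y0 '' (modeV (latticeOf b) k : Set (V1 n → ℂ)) ∧
    (Submodule.span ℂ (waveN '' JOrb (latticeOf b) y0 u2) :
        Set ((Fin n → ℝ) → ℂ)) ⊆
      Proj y0 '' (modeV (latticeOf b) k : Set (V1 n → ℂ)) ∧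
    (∀ α ∈ Jt (latticeOf b) y0,
      ∀ g ∈ Submodule.span ℂ (waveN '' JOrb (latticeOf b) y0 u1),
        (fun x => g (α.symm x)) ∈
          Submodule.span ℂ (waveN '' JOrb (latticeOf b) y0 u1)) ∧
    (∀ α ∈ Jt (latticeOf b) y0,
      ∀ g ∈ Submodule.span ℂ (waveN '' JOrb (latticeOf b) y0 u2),
        (fun x => g (α.symm x)) ∈
          Submodule.span ℂ (waveN '' JOrb (latticeOf b) y0 u2)) ∧
    Submodule.span ℂ (waveN '' JOrb (latticeOf b) y0 u1) ⊓
        Submodule.span ℂ (waveN '' JOrb (latticeOf b) y0 u2) = ⊥ := by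
  have hdisj : JOrb (latticeOf b) y0 u1 ∩ JOrb (latticeOf b) y0 u2 = ∅ :=
    JOrb_disjoint h1 h2 hz hz'
  refine ⟨(goodP_waveN hy0 h1 hi1).mem_image, (goodP_waveN hy0 h2 hi2).mem_image,
    hdisj, span_JOrb_ne_bot _ _ _, span_JOrb_ne_bot _ _ _,
    fun g hg => (span_JOrb_good hy0 h1 hi1 g hg).mem_image,
    fun g hg => (span_JOrb_good hy0 h2 hi2 g hg).mem_image,
    fun α hα g hg => span_JOrb_invariant u1 hα g hg,
    fun α hα g hg => span_JOrb_invariant u2 hα g hg, ?_⟩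
  exact disjoint_iff.mp (waveN_linearIndependent.disjoint_span_image
    (Set.disjoint_iff_inter_eq_empty.mpr hdisj))

end
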